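/- Let (X,ρ) be a metric space, let A ∈ CL(X) and let (A_k) be a sequence in CL(X). If (A_k) is Wijsman bounded and Wijsman statistically convergent to A, then (A_k) is Wijsman Cesàro summable to A. -/

import Mathlib

open Filter Metric Set
open scoped Classical

/-- A modulus: `f : [0,∞) → [0,∞)` with `f x = 0 ↔ x = 0`, subadditive,
increasing, and continuous (all on `[0,∞)`). -/
def IsModulus (f : ℝ → ℝ) : Prop :=
  (∀ x : ℝ, 0 ≤ x → 0 ≤ f x) ∧
  (∀ x : ℝ, 0 ≤ x → (f x = 0 ↔ x = 0)) ∧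
  (∀ x y : ℝ, 0 ≤ x → 0 ≤ y → f (x + y) ≤ f x + f y) ∧
  MonotoneOn f (Set.Ici 0) ∧
  ContinuousOn f (Set.Ici 0)

/-- `f` is unbounded on `[0,∞)`. -/
def IsUnboundedOn (f : ℝ → ℝ) : Prop := ∀ M : ℝ, ∃ x : ℝ, 0 ≤ x ∧ M < f x

/-- The number of elements `k ≤ n` with `k ∈ K`. -/
noncomputable def countLe (K : Set ℕ) (n : ℕ) : ℕ := Nat.card {k : ℕ | k ≤ n ∧ k ∈ K}

/-- `K ⊆ ℕ` has `f`-density `d`: `lim_n f(|{k ≤ n : k ∈ K}|)/f(n) = d`. -/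
def HasFDensity (f : ℝ → ℝ) (K : Set ℕ) (d : ℝ) : Prop :=
  Tendsto (fun n : ℕ => f (countLe K n : ℝ) / f (n : ℝ)) atTop (nhds d)

/-- `K ⊆ ℕ` has natural density `d`: `lim_n |{k ≤ n : k ∈ K}|/n = d`. -/
def HasNatDensity (K : Set ℕ) (d : ℝ) : Prop :=
  Tendsto (fun n : ℕ => (countLe K n : ℝ) / (n : ℝ)) atTop (nhds d)

/-- Wijsman convergence: `d(x, A_k) → d(x, A)` for every `x`. -/
def WijsmanConvTo {X : Type*} [MetricSpace X] (Aseq : ℕ → Set X) (A : Set X) : Prop :=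
  ∀ x : X, Tendsto (fun k : ℕ => infDist x (Aseq k)) atTop (nhds (infDist x A))

/-- Wijsman statistical convergence (with respect to the natural density). -/
def WijsmanStatConvTo {X : Type*} [MetricSpace X] (Aseq : ℕ → Set X) (A : Set X) : Prop :=
  ∀ x : X, ∀ ε : ℝ, 0 < ε →
    HasNatDensity {k : ℕ | ε ≤ |infDist x (Aseq k) - infDist x A|} 0

/-- `f`-Wijsman statistical convergence: `[WS^f]-lim A_k = A`. -/
def FWijsmanStatConvTo (f : ℝ → ℝ) {X : Type*} [MetricSpace X]
    (Aseq : ℕ → Set X) (A : Set X) : Prop :=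
  ∀ x : X, ∀ ε : ℝ, 0 < ε →
    HasFDensity f {k : ℕ | ε ≤ |infDist x (Aseq k) - infDist x A|} 0

/-- Wijsman boundedness: `sup_k d(x, A_k) < ∞` for every `x`. -/
def WijsmanBounded {X : Type*} [MetricSpace X] (Aseq : ℕ → Set X) : Prop :=
  ∀ x : X, ∃ M : ℝ, ∀ k : ℕ, infDist x (Aseq k) ≤ M

/-- Wijsman Cesàro summability to `A`. -/
def WijsmanCesaroTo {X : Type*} [MetricSpace X] (Aseq : ℕ → Set X) (A : Set X) : Prop :=
  ∀ x : X, Tendsto (fun n : ℕ => (∑ k ∈ Finset.range n, infDist x (Aseq k)) / (n : ℝ))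
    atTop (nhds (infDist x A))

/-- Wijsman strong Cesàro summability to `A` with respect to a modulus `f`:
`[Ww^f]-lim A_k = A`. -/
def WijsmanStrongCesaroTo (f : ℝ → ℝ) {X : Type*} [MetricSpace X]
    (Aseq : ℕ → Set X) (A : Set X) : Prop :=
  ∀ x : X, Tendsto
    (fun n : ℕ => (∑ k ∈ Finset.range n, f |infDist x (Aseq k) - infDist x A|) / (n : ℝ))
    atTop (nhds 0)

/-- A slowly varying modulus: `lim_{x→∞} f(ax)/f(x) = 1` for every `a > 0`. -/
def SlowlyVaryingOn (f : ℝ → ℝ) : Prop :=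
  ∀ a : ℝ, 0 < a → Tendsto (fun x : ℝ => f (a * x) / f x) atTop (nhds 1)

lemma countLe_eq_card (K : Set ℕ) (n : ℕ) :
    countLe K n = ((Finset.range (n+1)).filter (· ∈ K)).card := by
  have hset : {k : ℕ | k ≤ n ∧ k ∈ K} = ↑((Finset.range (n+1)).filter (· ∈ K)) := by
    ext k; simp [Nat.lt_succ_iff, And.comm]
  rw [countLe, hset, Nat.card_coe_set_eq, Set.ncard_coe_finset]

lemma aux_stat_cesaro (b : ℕ → ℝ) (C : ℝ)
    (hC : ∀ k, |b k| ≤ C)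
    (hd : ∀ ε : ℝ, 0 < ε → HasNatDensity {k | ε ≤ |b k|} 0) :
    Tendsto (fun n : ℕ => (∑ k ∈ Finset.range n, |b k|) / (n : ℝ)) atTop (nhds 0) := by
  rw [Metric.tendsto_atTop]
  intro ε hε
  set ε' := ε / 3 with hε'def
  have hε'pos : 0 < ε' := by positivity
  have hCpos : 0 < C + 1 :=
    lt_of_le_of_lt (le_trans (abs_nonneg _) (hC 0)) (lt_add_one C)
  have hdd := hd ε' hε'pos
  rw [HasNatDensity, Metric.tendsto_atTop] at hdd
  obtain ⟨N, hN⟩ := hdd (ε' / (C + 1)) (by positivity)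
  refine ⟨max N 1, fun n hn => ?_⟩
  have hn1 : 1 ≤ n := le_trans (le_max_right _ _) hn
  have hnN : N ≤ n := le_trans (le_max_left _ _) hn
  have hnpos : (0:ℝ) < n := by exact_mod_cast hn1
  set K : Set ℕ := {k | ε' ≤ |b k|} with hKdef
  have hcard : ((Finset.range n).filter (· ∈ K)).card ≤ countLe K n := by
    rw [countLe_eq_card]
    exact Finset.card_le_card
      (Finset.filter_subset_filter _ (Finset.range_subset_range.mpr (Nat.le_succ n)))
  have hsum : ∑ k ∈ Finset.range n, |b k| ≤ (countLe K n : ℝ) * (C + 1) + n * ε' := by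
    rw [← Finset.sum_filter_add_sum_filter_not (Finset.range n) (· ∈ K)]
    have h1 : ∑ k ∈ (Finset.range n).filter (· ∈ K), |b k|
        ≤ (countLe K n : ℝ) * (C + 1) := by
      calc ∑ k ∈ (Finset.range n).filter (· ∈ K), |b k|
          ≤ ∑ _k ∈ (Finset.range n).filter (· ∈ K), (C + 1) :=
            Finset.sum_le_sum fun k _ => le_trans (hC k) (le_add_of_nonneg_right one_pos.le)
        _ = ((Finset.range n).filter (· ∈ K)).card * (C + 1) := by
            rw [Finset.sum_const, nsmul_eq_mul]
        _ ≤ (countLe K n : ℝ) * (C + 1) := by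
            apply mul_le_mul_of_nonneg_right _ hCpos.le
            exact_mod_cast hcard
    have h2 : ∑ k ∈ (Finset.range n).filter (¬ · ∈ K), |b k| ≤ (n : ℝ) * ε' := by
      calc ∑ k ∈ (Finset.range n).filter (¬ · ∈ K), |b k|
          ≤ ∑ _k ∈ (Finset.range n).filter (¬ · ∈ K), ε' := by
            refine Finset.sum_le_sum fun k hk => ?_
            have := (Finset.mem_filter.mp hk).2
            simp only [hKdef, Set.mem_setOf_eq, not_le] at this
            exact this.le
        _ = ((Finset.range n).filter (¬ · ∈ K)).card * ε' := by
            rw [Finset.sum_const, nsmul_eq_mul]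
        _ ≤ (n : ℝ) * ε' := by
            apply mul_le_mul_of_nonneg_right _ hε'pos.le
            exact_mod_cast le_trans (Finset.card_filter_le _ _) (by simp)
    linarith
  have hcnt : (countLe K n : ℝ) / n < ε' / (C + 1) := by
    have := hN n hnN
    rw [Real.dist_eq, sub_zero, abs_of_nonneg (by positivity)] at this
    exact this
  have hnonneg : 0 ≤ ∑ k ∈ Finset.range n, |b k| :=
    Finset.sum_nonneg fun k _ => abs_nonneg _
  rw [Real.dist_eq, sub_zero, abs_of_nonneg (by positivity)]
  have key : (∑ k ∈ Finset.range n, |b k|) / n ≤ (countLe K n : ℝ) / n * (C + 1) + ε' := by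
    rw [div_le_iff₀ hnpos]
    calc ∑ k ∈ Finset.range n, |b k| ≤ (countLe K n : ℝ) * (C + 1) + n * ε' := hsum
      _ = ((countLe K n : ℝ) / n * (C + 1) + ε') * n := by field_simp
  have : (countLe K n : ℝ) / n * (C + 1) < ε' := by
    calc (countLe K n : ℝ) / n * (C + 1) < ε' / (C + 1) * (C + 1) :=
          mul_lt_mul_of_pos_right hcnt hCpos
      _ = ε' := by field_simp
  calc (∑ k ∈ Finset.range n, |b k|) / n ≤ (countLe K n : ℝ) / n * (C + 1) + ε' := key
    _ < ε' + ε' := by linarith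
    _ < ε := by rw [hε'def]; linarith

/-- A Wijsman bounded, Wijsman statistically convergent sequence is
Wijsman Cesàro summable (to the same limit). -/
theorem stmt6 {X : Type*} [MetricSpace X]
    (A : Set X) (hA : A.Nonempty) (hAcl : IsClosed A)
    (Aseq : ℕ → Set X) (hAseq : ∀ k, (Aseq k).Nonempty ∧ IsClosed (Aseq k))
    (hbd : WijsmanBounded Aseq) (h : WijsmanStatConvTo Aseq A) :
    WijsmanCesaroTo Aseq A := by
  intro x
  set L := infDist x A with hL
  set b : ℕ → ℝ := fun k => infDist x (Aseq k) - L with hb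
  obtain ⟨M, hM⟩ := hbd x
  have hCb : ∀ k, |b k| ≤ M + |L| := by
    intro k
    calc |b k| ≤ |infDist x (Aseq k)| + |L| := abs_sub _ _
      _ = infDist x (Aseq k) + |L| := by rw [abs_of_nonneg infDist_nonneg]
      _ ≤ M + |L| := add_le_add_left (hM k) _
  have hd : ∀ ε : ℝ, 0 < ε → HasNatDensity {k | ε ≤ |b k|} 0 := fun ε hε => h x ε hε
  have hzero := aux_stat_cesaro b (M + |L|) hCb hd
  rw [← tendsto_sub_nhds_zero_iff]
  refine squeeze_zero_norm' ?_ hzero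
  filter_upwards [eventually_ge_atTop 1] with n hn
  have hnpos : (0:ℝ) < n := by exact_mod_cast hn
  have heq : (∑ k ∈ Finset.range n, infDist x (Aseq k)) / (n : ℝ) - L
      = (∑ k ∈ Finset.range n, b k) / (n : ℝ) := by
    rw [Finset.sum_sub_distrib, Finset.sum_const, sub_div, nsmul_eq_mul]
    congr 1
    field_simp
    simp
  rw [Real.norm_eq_abs, heq, abs_div, abs_of_pos hnpos]
  gcongr
  exact Finset.abs_sum_le_sum_abs _ _
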